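/- For α > 0 define L_α(x,y) = (cos x·cos αy, cos x·sin αy, sin x·cos y, sin x·sin y), G(x) = α²·cos²x + sin²x, and n(x,y) = G(x)^{−1/2}·( sin x·sin αy, −sin x·cos αy, −α·cos x·sin y, α·cos x·cos y ). Then: (i) ⟨L_α, L_α⟩ = 1, ⟨(L_α)_x, (L_α)_x⟩ = 1, ⟨(L_α)_y, (L_α)_y⟩ = G(x), ⟨(L_α)_x, (L_α)_y⟩ = 0; (ii) ⟨n,n⟩ = 1 and n is orthogonal to L_α, (L_α)_x, (L_α)_y; (iii) G(x)·⟨(L_α)_{xx}, n⟩ + ⟨(L_α)_{yy}, n⟩ = 0, so L_α parametrizes a minimal surface in S³; and (iv) the Gauss curvature of the metric dx² + G(x)·dy², namely K(x) = −G''(x)/(2G(x)) + G'(x)²/(4G(x)²), equals 1 − α²/(α²·cos²x + sin²x)², which is non-constant whenever α ≠ 1. -/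

import Mathlib

open Real
open scoped InnerProductSpace

noncomputable section

/-- ℝ⁴ with the standard Euclidean inner product. -/
abbrev E4 := EuclideanSpace ℝ (Fin 4)

/-- Partial derivative with respect to the first parameter. -/
def pu {F : Type*} [NormedAddCommGroup F] [NormedSpace ℝ F]
    (f : ℝ × ℝ → F) (p : ℝ × ℝ) : F := fderiv ℝ f p (1, 0)

/-- Partial derivative with respect to the second parameter. -/
def pv {F : Type*} [NormedAddCommGroup F] [NormedSpace ℝ F]
    (f : ℝ × ℝ → F) (p : ℝ × ℝ) : F := fderiv ℝ f p (0, 1)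

/-- The Lawson torus parametrization
`L_α(x,y) = (cos x·cos αy, cos x·sin αy, sin x·cos y, sin x·sin y)`. -/
def Lawson (α : ℝ) (q : ℝ × ℝ) : E4 :=
  (WithLp.equiv 2 (Fin 4 → ℝ)).symm
    ![Real.cos q.1 * Real.cos (α * q.2), Real.cos q.1 * Real.sin (α * q.2),
      Real.sin q.1 * Real.cos q.2, Real.sin q.1 * Real.sin q.2]

/-- `G(x) = α²·cos²x + sin²x`. -/
def Gmetric (α x : ℝ) : ℝ := α ^ 2 * Real.cos x ^ 2 + Real.sin x ^ 2

/-- The unit normal of the Lawson torus: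
`n(x,y) = G(x)^{−1/2}·(sin x·sin αy, −sin x·cos αy, −α cos x·sin y, α cos x·cos y)`. -/
def nL (α : ℝ) (q : ℝ × ℝ) : E4 :=
  (1 / Real.sqrt (Gmetric α q.1)) • (WithLp.equiv 2 (Fin 4 → ℝ)).symm
    ![Real.sin q.1 * Real.sin (α * q.2), -(Real.sin q.1 * Real.cos (α * q.2)),
      -(α * Real.cos q.1 * Real.sin q.2), α * Real.cos q.1 * Real.cos q.2]

/-! ### Auxiliary machinery -/

lemma inner_e4 (a b : Fin 4 → ℝ) :
    ⟪(WithLp.equiv 2 (Fin 4 → ℝ)).symm a, (WithLp.equiv 2 (Fin 4 → ℝ)).symm b⟫_ℝ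
      = a 0 * b 0 + a 1 * b 1 + a 2 * b 2 + a 3 * b 3 := by
  simp [PiLp.inner_apply, RCLike.inner_apply, Fin.sum_univ_four]
  ring

lemma key (f g : Fin 4 → ℝ → ℝ) (f' g' : Fin 4 → ℝ) (q : ℝ × ℝ)
    (hf : ∀ i, HasDerivAt (f i) (f' i) q.1) (hg : ∀ i, HasDerivAt (g i) (g' i) q.2) :
    pu (fun p => (WithLp.equiv 2 (Fin 4 → ℝ)).symm fun i => f i p.1 * g i p.2) q
      = (WithLp.equiv 2 (Fin 4 → ℝ)).symm (fun i => f' i * g i q.2) ∧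
    pv (fun p => (WithLp.equiv 2 (Fin 4 → ℝ)).symm fun i => f i p.1 * g i p.2) q
      = (WithLp.equiv 2 (Fin 4 → ℝ)).symm (fun i => f i q.1 * g' i) := by
  have h1 : ∀ i, HasFDerivAt (fun p : ℝ × ℝ => f i p.1)
      ((f' i) • ContinuousLinearMap.fst ℝ ℝ ℝ) q :=
    fun i => (hf i).comp_hasFDerivAt q hasFDerivAt_fst
  have h2 : ∀ i, HasFDerivAt (fun p : ℝ × ℝ => g i p.2)
      ((g' i) • ContinuousLinearMap.snd ℝ ℝ ℝ) q :=
    fun i => (hg i).comp_hasFDerivAt q hasFDerivAt_snd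
  have hmul : ∀ i, HasFDerivAt (fun p : ℝ × ℝ => f i p.1 * g i p.2)
      (f i q.1 • ((g' i) • ContinuousLinearMap.snd ℝ ℝ ℝ)
        + g i q.2 • ((f' i) • ContinuousLinearMap.fst ℝ ℝ ℝ)) q :=
    fun i => (h1 i).mul (h2 i)
  have hpi : HasFDerivAt (fun p : ℝ × ℝ => fun i => f i p.1 * g i p.2)
      (ContinuousLinearMap.pi (fun i => f i q.1 • ((g' i) • ContinuousLinearMap.snd ℝ ℝ ℝ)
        + g i q.2 • ((f' i) • ContinuousLinearMap.fst ℝ ℝ ℝ))) q :=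
    hasFDerivAt_pi.2 hmul
  have htot : HasFDerivAt (fun p : ℝ × ℝ =>
      (WithLp.equiv 2 (Fin 4 → ℝ)).symm fun i => f i p.1 * g i p.2)
      (((PiLp.continuousLinearEquiv 2 ℝ (fun _ : Fin 4 => ℝ)).symm :
          (Fin 4 → ℝ) →L[ℝ] E4).comp
        (ContinuousLinearMap.pi (fun i => f i q.1 • ((g' i) • ContinuousLinearMap.snd ℝ ℝ ℝ)
          + g i q.2 • ((f' i) • ContinuousLinearMap.fst ℝ ℝ ℝ)))) q :=
    (((PiLp.continuousLinearEquiv 2 ℝ (fun _ : Fin 4 => ℝ)).symm :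
          (Fin 4 → ℝ) →L[ℝ] E4).hasFDerivAt).comp q hpi
  constructor
  · rw [pu, htot.fderiv]
    simp
    ext i
    simp [mul_comm]
  · rw [pv, htot.fderiv]
    simp

/-- x-factors of the Lawson parametrization. -/
def fA : Fin 4 → ℝ → ℝ := ![Real.cos, Real.cos, Real.sin, Real.sin]
/-- y-factors of the Lawson parametrization. -/
def gA (α : ℝ) : Fin 4 → ℝ → ℝ :=
  ![fun y => Real.cos (α * y), fun y => Real.sin (α * y), Real.cos, Real.sin]
/-- derivatives of the x-factors. -/
def fX : Fin 4 → ℝ → ℝ := ![fun x => -Real.sin x, fun x => -Real.sin x, Real.cos, Real.cos]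
/-- second derivatives of the x-factors. -/
def fXX : Fin 4 → ℝ → ℝ := ![fun x => -Real.cos x, fun x => -Real.cos x,
  fun x => -Real.sin x, fun x => -Real.sin x]
/-- derivatives of the y-factors. -/
def gY (α : ℝ) : Fin 4 → ℝ → ℝ :=
  ![fun y => -Real.sin (α * y) * α, fun y => Real.cos (α * y) * α,
    fun y => -Real.sin y, Real.cos]
/-- second derivatives of the y-factors. -/
def gYY (α : ℝ) : Fin 4 → ℝ → ℝ :=
  ![fun y => -Real.cos (α * y) * α * α, fun y => -Real.sin (α * y) * α * α,
    fun y => -Real.cos y, fun y => -Real.sin y]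

lemma hfA (x : ℝ) : ∀ i, HasDerivAt (fA i) (fX i x) x := by
  intro i
  fin_cases i <;> simp only [fA, fX, Matrix.cons_val_zero, Matrix.cons_val_one,
    Matrix.head_cons, Matrix.cons_val_two, Matrix.tail_cons, Matrix.cons_val_three]
  · exact Real.hasDerivAt_cos x
  · exact Real.hasDerivAt_cos x
  · exact Real.hasDerivAt_sin x
  · exact Real.hasDerivAt_sin x

lemma hfX (x : ℝ) : ∀ i, HasDerivAt (fX i) (fXX i x) x := by
  intro i
  fin_cases i <;> simp only [fX, fXX, Matrix.cons_val_zero, Matrix.cons_val_one,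
    Matrix.head_cons, Matrix.cons_val_two, Matrix.tail_cons, Matrix.cons_val_three]
  · exact ((Real.hasDerivAt_sin x).neg).congr_deriv (by show _ = -Real.cos x; ring)
  · exact ((Real.hasDerivAt_sin x).neg).congr_deriv (by show _ = -Real.cos x; ring)
  · exact Real.hasDerivAt_cos x
  · exact Real.hasDerivAt_cos x

lemma hgA (α y : ℝ) : ∀ i, HasDerivAt (gA α i) (gY α i y) y := by
  intro i
  fin_cases i <;> simp only [gA, gY, Matrix.cons_val_zero, Matrix.cons_val_one,
    Matrix.head_cons, Matrix.cons_val_two, Matrix.tail_cons, Matrix.cons_val_three]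
  · exact (((Real.hasDerivAt_cos (α * y)).comp y
      ((hasDerivAt_id y).const_mul α))).congr_deriv (by show _ = -Real.sin (α*y) * α; ring)
  · exact (((Real.hasDerivAt_sin (α * y)).comp y
      ((hasDerivAt_id y).const_mul α))).congr_deriv (by show _ = Real.cos (α*y) * α; ring)
  · exact Real.hasDerivAt_cos y
  · exact Real.hasDerivAt_sin y

lemma hgY (α y : ℝ) : ∀ i, HasDerivAt (gY α i) (gYY α i y) y := by
  intro i
  fin_cases i <;> simp only [gY, gYY, Matrix.cons_val_zero, Matrix.cons_val_one,
    Matrix.head_cons, Matrix.cons_val_two, Matrix.tail_cons, Matrix.cons_val_three]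
  · exact ((((Real.hasDerivAt_sin (α * y)).comp y
      ((hasDerivAt_id y).const_mul α)).neg).mul_const α).congr_deriv
        (by show _ = -Real.cos (α*y) * α * α; ring)
  · exact ((((Real.hasDerivAt_cos (α * y)).comp y
      ((hasDerivAt_id y).const_mul α))).mul_const α).congr_deriv
        (by show _ = -Real.sin (α*y) * α * α; ring)
  · exact ((Real.hasDerivAt_sin y).neg).congr_deriv (by show _ = -Real.cos y; ring)
  · exact Real.hasDerivAt_cos y

lemma lawson_eq (α : ℝ) : Lawson α
    = fun p => (WithLp.equiv 2 (Fin 4 → ℝ)).symm fun i => fA i p.1 * gA α i p.2 := by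
  funext p
  unfold Lawson
  refine congrArg _ ?_
  funext i
  fin_cases i <;> rfl

lemma pu_lawson (α : ℝ) : pu (Lawson α)
    = fun q => (WithLp.equiv 2 (Fin 4 → ℝ)).symm fun i => fX i q.1 * gA α i q.2 := by
  funext q
  rw [lawson_eq]
  exact (key (fA) (gA α) (fun i => fX i q.1) (fun i => gY α i q.2) q (hfA q.1) (hgA α q.2)).1

lemma pv_lawson (α : ℝ) : pv (Lawson α)
    = fun q => (WithLp.equiv 2 (Fin 4 → ℝ)).symm fun i => fA i q.1 * gY α i q.2 := by
  funext q
  rw [lawson_eq]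
  exact (key (fA) (gA α) (fun i => fX i q.1) (fun i => gY α i q.2) q (hfA q.1) (hgA α q.2)).2

lemma pupu_lawson (α : ℝ) (q : ℝ × ℝ) : pu (pu (Lawson α)) q
    = (WithLp.equiv 2 (Fin 4 → ℝ)).symm fun i => fXX i q.1 * gA α i q.2 := by
  rw [pu_lawson]
  exact (key (fX) (gA α) (fun i => fXX i q.1) (fun i => gY α i q.2) q (hfX q.1) (hgA α q.2)).1

lemma pvpv_lawson (α : ℝ) (q : ℝ × ℝ) : pv (pv (Lawson α)) q
    = (WithLp.equiv 2 (Fin 4 → ℝ)).symm fun i => fA i q.1 * gYY α i q.2 := by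
  rw [pv_lawson]
  exact (key (fA) (gY α) (fun i => fX i q.1) (fun i => gYY α i q.2) q (hfA q.1) (hgY α q.2)).2

lemma Gpos (α : ℝ) (hα : 0 < α) (x : ℝ) : 0 < Gmetric α x := by
  have h := Real.sin_sq_add_cos_sq x
  unfold Gmetric
  nlinarith [sq_nonneg (Real.sin x), sq_nonneg (Real.cos x), mul_pos hα hα,
    sq_nonneg (α * Real.cos x), sq_nonneg (α * Real.sin x)]

lemma aux1 (α : ℝ) (hα : 0 < α) (q : ℝ × ℝ) :
      ⟪Lawson α q, Lawson α q⟫_ℝ = 1 ∧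
      ⟪pu (Lawson α) q, pu (Lawson α) q⟫_ℝ = 1 ∧
      ⟪pv (Lawson α) q, pv (Lawson α) q⟫_ℝ = Gmetric α q.1 ∧
      ⟪pu (Lawson α) q, pv (Lawson α) q⟫_ℝ = 0 := by
  rw [pu_lawson, pv_lawson, lawson_eq]
  refine ⟨?_, ?_, ?_, ?_⟩ <;>
    simp only [inner_e4, fA, gA, fX, gY, Gmetric, Matrix.cons_val_zero, Matrix.cons_val_one,
      Matrix.head_cons, Matrix.cons_val_two, Matrix.tail_cons, Matrix.cons_val_three]
  · linear_combination Real.cos q.1 ^ 2 * Real.sin_sq_add_cos_sq (α * q.2)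
      + Real.sin q.1 ^ 2 * Real.sin_sq_add_cos_sq q.2 + Real.sin_sq_add_cos_sq q.1
  · linear_combination Real.sin q.1 ^ 2 * Real.sin_sq_add_cos_sq (α * q.2)
      + Real.cos q.1 ^ 2 * Real.sin_sq_add_cos_sq q.2 + Real.sin_sq_add_cos_sq q.1
  · linear_combination (α ^ 2 * Real.cos q.1 ^ 2) * Real.sin_sq_add_cos_sq (α * q.2)
      + Real.sin q.1 ^ 2 * Real.sin_sq_add_cos_sq q.2
  · ring

lemma aux2 (α : ℝ) (hα : 0 < α) (q : ℝ × ℝ) :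
      ⟪nL α q, nL α q⟫_ℝ = 1 ∧
      ⟪nL α q, Lawson α q⟫_ℝ = 0 ∧
      ⟪nL α q, pu (Lawson α) q⟫_ℝ = 0 ∧
      ⟪nL α q, pv (Lawson α) q⟫_ℝ = 0 := by
  have hG := Gpos α hα q.1
  have hs0 : Real.sqrt (Gmetric α q.1) ≠ 0 := (Real.sqrt_pos.mpr hG).ne'
  have hss := Real.mul_self_sqrt hG.le
  rw [pu_lawson, pv_lawson, lawson_eq]
  unfold nL
  refine ⟨?_, ?_, ?_, ?_⟩ <;>
    simp only [real_inner_smul_left, real_inner_smul_right, inner_e4, fA, gA, fX, gY,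
      Matrix.cons_val_zero, Matrix.cons_val_one, Matrix.head_cons, Matrix.cons_val_two,
      Matrix.tail_cons, Matrix.cons_val_three]
  · field_simp
    unfold Gmetric
    linear_combination Real.sin q.1 ^ 2 * Real.sin_sq_add_cos_sq (α * q.2)
      + (α ^ 2 * Real.cos q.1 ^ 2) * Real.sin_sq_add_cos_sq q.2
      - Real.sq_sqrt (le_of_lt (show (0:ℝ) < α ^ 2 * Real.cos q.1 ^ 2 + Real.sin q.1 ^ 2 from hG))
  · ring
  · ring
  · linear_combination (1 / Real.sqrt (Gmetric α q.1)) * (-(α * Real.cos q.1 * Real.sin q.1))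
        * Real.sin_sq_add_cos_sq (α * q.2)
      + (1 / Real.sqrt (Gmetric α q.1)) * (α * Real.cos q.1 * Real.sin q.1)
        * Real.sin_sq_add_cos_sq q.2

lemma aux3 (α : ℝ) (hα : 0 < α) (q : ℝ × ℝ) :
      Gmetric α q.1 * ⟪pu (pu (Lawson α)) q, nL α q⟫_ℝ
        + ⟪pv (pv (Lawson α)) q, nL α q⟫_ℝ = 0 := by
  rw [pupu_lawson, pvpv_lawson]
  unfold nL
  simp only [real_inner_smul_left, real_inner_smul_right, inner_e4, fA, gA, fXX, gYY,
    Matrix.cons_val_zero, Matrix.cons_val_one, Matrix.head_cons, Matrix.cons_val_two,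
    Matrix.tail_cons, Matrix.cons_val_three]
  ring

lemma aux4 (α : ℝ) (hα : 0 < α) (x : ℝ) :
      -(deriv (deriv (Gmetric α)) x) / (2 * Gmetric α x)
        + (deriv (Gmetric α) x) ^ 2 / (4 * (Gmetric α x) ^ 2) =
      1 - α ^ 2 / (α ^ 2 * Real.cos x ^ 2 + Real.sin x ^ 2) ^ 2 := by
  have hG := Gpos α hα x
  have hG1 : ∀ y, HasDerivAt (Gmetric α) (2 * (1 - α ^ 2) * (Real.sin y * Real.cos y)) y := by
    intro y
    have h := (((Real.hasDerivAt_cos y).pow 2).const_mul (α ^ 2)).add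
      ((Real.hasDerivAt_sin y).pow 2)
    exact h.congr_deriv (by ring)
  have hd1 : deriv (Gmetric α) = fun y => 2 * (1 - α ^ 2) * (Real.sin y * Real.cos y) :=
    funext fun y => (hG1 y).deriv
  have hG2 : HasDerivAt (fun y => 2 * (1 - α ^ 2) * (Real.sin y * Real.cos y))
      (2 * (1 - α ^ 2) * (Real.cos x ^ 2 - Real.sin x ^ 2)) x := by
    have h := ((Real.hasDerivAt_sin x).mul (Real.hasDerivAt_cos x)).const_mul (2 * (1 - α ^ 2))
    exact h.congr_deriv (by ring)
  rw [hd1, hG2.deriv]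
  have hGx : Gmetric α x = α ^ 2 * Real.cos x ^ 2 + Real.sin x ^ 2 := rfl
  rw [hGx]
  have hP := Real.sin_sq_add_cos_sq x
  have hne : (α ^ 2 * Real.cos x ^ 2 + Real.sin x ^ 2) ≠ 0 := by rw [← hGx]; exact hG.ne'
  field_simp
  linear_combination (-(8 * α ^ 2) * (α ^ 2 * Real.cos x ^ 2 + Real.sin x ^ 2) ^ 3
    * (Real.sin x ^ 2 + Real.cos x ^ 2 + 1) + ((8) * α^8 * Real.cos x^8 * Real.sin x^0 + (24) * α^6 * Real.cos x^6 * Real.sin x^2 + (8) * α^8 * Real.cos x^6 * Real.sin x^2 + (8) * α^8 * Real.cos x^6 * Real.sin x^0 + (24) * α^4 * Real.cos x^4 * Real.sin x^4 + (24) * α^6 * Real.cos x^4 * Real.sin x^4 + (24) * α^6 * Real.cos x^4 * Real.sin x^2 + (-4) * α^2 * Real.cos x^2 * Real.sin x^0 + (8) * α^2 * Real.cos x^2 * Real.sin x^6 + (24) * α^4 * Real.cos x^2 * Real.sin x^6 + (24) * α^4 * Real.cos x^2 * Real.sin x^4 + (-4) * α^2 * Real.cos x^0 * Real.sin x^2 +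 (8) * α^2 * Real.cos x^0 * Real.sin x^8 + (-4) * α^2 * Real.cos x^0 * Real.sin x^0 + (8) * α^2 * Real.cos x^0 * Real.sin x^6)) * hP

lemma aux5 (α : ℝ) (hα : 0 < α) (hne : α ≠ 1) :
    ¬ ∃ c : ℝ, ∀ x : ℝ,
      -(deriv (deriv (Gmetric α)) x) / (2 * Gmetric α x)
        + (deriv (Gmetric α) x) ^ 2 / (4 * (Gmetric α x) ^ 2) = c := by
  rintro ⟨c, hc⟩
  have h0 := hc 0
  have h1 := hc (Real.pi / 2)
  rw [aux4 α hα 0] at h0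
  rw [aux4 α hα (Real.pi / 2)] at h1
  simp [Real.cos_pi_div_two, Real.sin_pi_div_two] at h0 h1
  have hα0 : α ≠ 0 := hα.ne'
  have h2 : α ^ 2 / (α ^ 2) ^ 2 = 1 / α ^ 2 := by
    field_simp
  rw [h2] at h0
  have h3 : (α - 1) * (α + 1) * (α ^ 2 + 1)= 0 := by
    have := h0.trans h1.symm
    field_simp at this
    linear_combination this
  rcases mul_eq_zero.1 h3 with h4 | h4
  · rcases mul_eq_zero.1 h4 with h5 | h5
    · exact hne (by linarith)
    · linarith
  · nlinarith


/-- (i) `L_α` is an orthogonal parametrization of a surface in `S³` with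
first fundamental form `dx² + G(x)dy²`; (ii) `nL` is a unit normal; (iii) `L_α` is minimal
in `S³`: `G·⟨(L_α)_{xx}, n⟩ + ⟨(L_α)_{yy}, n⟩ = 0`; (iv) the Gauss curvature of
`dx² + G(x)dy²` equals `1 − α²/(α²cos²x + sin²x)²`, non-constant whenever `α ≠ 1`. -/
theorem stmt_19 (α : ℝ) (hα : 0 < α) :
    (∀ q : ℝ × ℝ,
      ⟪Lawson α q, Lawson α q⟫_ℝ = 1 ∧
      ⟪pu (Lawson α) q, pu (Lawson α) q⟫_ℝ = 1 ∧
      ⟪pv (Lawson α) q, pv (Lawson α) q⟫_ℝ = Gmetric α q.1 ∧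
      ⟪pu (Lawson α) q, pv (Lawson α) q⟫_ℝ = 0) ∧
    (∀ q : ℝ × ℝ,
      ⟪nL α q, nL α q⟫_ℝ = 1 ∧
      ⟪nL α q, Lawson α q⟫_ℝ = 0 ∧
      ⟪nL α q, pu (Lawson α) q⟫_ℝ = 0 ∧
      ⟪nL α q, pv (Lawson α) q⟫_ℝ = 0) ∧
    (∀ q : ℝ × ℝ,
      Gmetric α q.1 * ⟪pu (pu (Lawson α)) q, nL α q⟫_ℝ
        + ⟪pv (pv (Lawson α)) q, nL α q⟫_ℝ = 0) ∧
    (∀ x : ℝ,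
      -(deriv (deriv (Gmetric α)) x) / (2 * Gmetric α x)
        + (deriv (Gmetric α) x) ^ 2 / (4 * (Gmetric α x) ^ 2) =
      1 - α ^ 2 / (α ^ 2 * Real.cos x ^ 2 + Real.sin x ^ 2) ^ 2) ∧
    (α ≠ 1 → ¬ ∃ c : ℝ, ∀ x : ℝ,
      -(deriv (deriv (Gmetric α)) x) / (2 * Gmetric α x)
        + (deriv (Gmetric α) x) ^ 2 / (4 * (Gmetric α x) ^ 2) = c) :=
  ⟨aux1 α hα, aux2 α hα, aux3 α hα, aux4 α hα, fun hne => aux5 α hα hne⟩
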